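/- If a language L over alphabet Σ admits a fooling set of cardinality m (a set of pairs (x_i, y_i) with x_i y_i ∈ L for all i, and for all i ≠ j, x_i y_j ∉ L or x_j y_i ∉ L), then every nondeterministic finite automaton recognizing L has at least m states. -/

import Mathlib

lemma nfa_evalFrom_append {α σ : Type} (M : NFA α σ) (S : Set σ) (x y : List α) :
    M.evalFrom S (x ++ y) = M.evalFrom (M.evalFrom S x) y :=
  List.foldl_append

lemma nfa_mem_evalFrom_iff {α σ : Type} (M : NFA α σ) (S : Set σ) (x : List α) (q : σ) :
    q ∈ M.evalFrom S x ↔ ∃ p ∈ S, q ∈ M.evalFrom {p} x := by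
  induction x generalizing S with
  | nil => simp [NFA.evalFrom_nil]
  | cons a x ih =>
    have hstep : ∀ T : Set σ, M.evalFrom T (a :: x) = M.evalFrom (M.stepSet T a) x := by
      intro T; rfl
    rw [hstep, ih]
    constructor
    · rintro ⟨r, hr, hq⟩
      rw [NFA.mem_stepSet] at hr
      obtain ⟨p, hp, hrp⟩ := hr
      refine ⟨p, hp, ?_⟩
      rw [hstep, ih]
      exact ⟨r, by rw [NFA.mem_stepSet]; exact ⟨p, rfl, hrp⟩, hq⟩
    · rintro ⟨p, hp, hq⟩
      rw [hstep, ih] at hq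
      obtain ⟨r, hr, hq⟩ := hq
      rw [NFA.mem_stepSet] at hr
      obtain ⟨p', hp', hrp⟩ := hr
      cases hp'
      exact ⟨r, by rw [NFA.mem_stepSet]; exact ⟨p, hp, hrp⟩, hq⟩

/-- Fooling set lower bound: if a language `L` admits a fooling set of
cardinality `m`, then every NFA recognizing `L` has at least `m` states. -/
theorem fooling_set_lower_bound {α : Type} (L : Language α) (m : ℕ)
    (f : Fin m → List α × List α)
    (h₁ : ∀ i : Fin m, (f i).1 ++ (f i).2 ∈ L)
    (h₂ : ∀ i j : Fin m, i ≠ j →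
      (f i).1 ++ (f j).2 ∉ L ∨ (f j).1 ++ (f i).2 ∉ L)
    {σ : Type} [Fintype σ] (M : NFA α σ) (hM : M.accepts = L) :
    m ≤ Fintype.card σ := by
  -- for each i, pick a state on an accepting run after reading (f i).1
  have key : ∀ i : Fin m, ∃ q : σ, q ∈ M.evalFrom M.start (f i).1 ∧
      ∃ s ∈ M.accept, s ∈ M.evalFrom {q} (f i).2 := by
    intro i
    have : (f i).1 ++ (f i).2 ∈ M.accepts := hM ▸ h₁ i
    rw [NFA.mem_accepts] at this
    obtain ⟨s, hs, hmem⟩ := this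
    rw [nfa_evalFrom_append, nfa_mem_evalFrom_iff] at hmem
    obtain ⟨q, hq, hsq⟩ := hmem
    exact ⟨q, hq, s, hs, hsq⟩
  choose g hg1 hg2 using key
  have hinj : Function.Injective g := by
    intro i j hij
    by_contra hne
    -- x_i y_j ∈ L
    have acc : ∀ a b : Fin m, g a = g b → (f a).1 ++ (f b).2 ∈ L := by
      intro a b hab
      rw [← hM, NFA.mem_accepts]
      obtain ⟨s, hs, hsq⟩ := hg2 b
      refine ⟨s, hs, ?_⟩
      rw [nfa_evalFrom_append, nfa_mem_evalFrom_iff]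
      exact ⟨g a, hg1 a, hab ▸ hsq⟩
    rcases h₂ i j hne with h | h
    · exact h (acc i j hij)
    · exact h (acc j i hij.symm)
  simpa using Fintype.card_le_of_injective g hinj
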